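/- Let n ≥ 2, 1 ≤ k ≤ n−1, and a, b > 0. Let A be the diagonal n×n matrix diag(a, …, a, b) (with n−1 entries equal to a and last entry b), and let Q be the diagonal n×n matrix whose first k diagonal entries equal b/a and whose remaining n−k diagonal entries equal 1. Then ∫_{S^{n-1}} ⋯ ∫_{S^{n-1}} |det(Av₁, …, Av_k, v_{k+1}, …, vₙ)| dv₁ ⋯ dvₙ = a^k · ∫_{S^{n-1}} ⋯ ∫_{S^{n-1}} |det(v₁, …, v_{n−1}, Q vₙ)| dv₁ ⋯ dvₙ, where det(w₁,…,wₙ) denotes the determinant of the matrix with columns w₁,…,wₙ and each integration is with respect to the spherical Lebesgue measure on S^{n-1}. -/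

import Mathlib

open MeasureTheory Real Set

noncomputable def sphereMeasure (n : ℕ) :
    Measure (Metric.sphere (0 : EuclideanSpace ℝ (Fin n)) 1) :=
  (volume : Measure (EuclideanSpace ℝ (Fin n))).toSphere

section Aux

open Metric

/-- Transposition is measure preserving on `Fin n → Fin n → ℝ` with the product measure. -/
lemma measurePreserving_transpose (n : ℕ) :
    MeasurePreserving (fun (Y : Fin n → Fin n → ℝ) (j i : Fin n) => Y i j)
      (Measure.pi fun _ => Measure.pi fun _ => (volume : Measure ℝ))
      (Measure.pi fun _ => Measure.pi fun _ => (volume : Measure ℝ)) := by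
  have hmeas : Measurable (fun (Y : Fin n → Fin n → ℝ) (j i : Fin n) => Y i j) :=
    measurable_pi_lambda _ fun j => measurable_pi_lambda _ fun i =>
      (measurable_pi_apply j).comp (measurable_pi_apply i)
  refine ⟨hmeas, ?_⟩
  refine (Measure.pi_eq_generateFrom (C := fun _ => Set.pi univ '' Set.pi univ
        fun _ : Fin n => {s : Set ℝ | MeasurableSet s})
      (fun _ => generateFrom_pi) (fun _ => isPiSystem_pi)
      (fun _ => Measure.FiniteSpanningSetsIn.pi fun _ => volume.toFiniteSpanningSetsIn)
      ?_).symm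
  intro s hs
  have hs' : ∀ j, ∃ t : Fin n → Set ℝ, (∀ i, MeasurableSet (t i)) ∧ Set.pi univ t = s j := by
    intro j
    obtain ⟨t, ht, hteq⟩ := hs j
    exact ⟨t, fun i => ht i (mem_univ i), hteq⟩
  choose t htm hteq using hs'
  have hsm : ∀ j, MeasurableSet (s j) := fun j => by
    rw [← hteq j]; exact MeasurableSet.univ_pi fun i => htm j i
  rw [Measure.map_apply hmeas (MeasurableSet.univ_pi hsm)]
  have hpre : (fun (Y : Fin n → Fin n → ℝ) (j i : Fin n) => Y i j) ⁻¹' (Set.pi univ s)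
      = Set.pi univ fun i => Set.pi univ fun j => t j i := by
    ext Y
    simp only [mem_preimage, Set.mem_univ_pi, ← hteq]
    exact ⟨fun h i j => h j i, fun h j i => h i j⟩
  rw [hpre, Measure.pi_pi]
  simp_rw [Measure.pi_pi]
  rw [Finset.prod_comm]
  refine Finset.prod_congr rfl fun j _ => ?_
  rw [← hteq j, Measure.pi_pi]

variable {n : ℕ}

local notation "E" n => EuclideanSpace ℝ (Fin n)
local notation "Sph" n => Metric.sphere (0 : EuclideanSpace ℝ (Fin n)) 1

/-- The weighted Gaussian-type integral over `(E n)^n`. -/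
noncomputable def gaussDet (n : ℕ) (c : Fin n → Fin n → ℝ) : ℝ :=
  ∫ X : Fin n → EuclideanSpace ℝ (Fin n),
    (∏ j, rexp (-‖X j‖ ^ 2)) *
      |Matrix.det (Matrix.of fun i j : Fin n => c i j * (X j) i)|
    ∂(Measure.pi fun _ => (volume : Measure (EuclideanSpace ℝ (Fin n))))

/-- The one-dimensional radial constant. -/
noncomputable def radConst (n : ℕ) : ℝ :=
  ∫ r : Ioi (0 : ℝ), rexp (-(r : ℝ) ^ 2) * (r : ℝ)
    ∂(Measure.volumeIoiPow (Module.finrank ℝ (EuclideanSpace ℝ (Fin n)) - 1))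

lemma radConst_pos (n : ℕ) : 0 < radConst n := by
  set m : ℕ := Module.finrank ℝ (EuclideanSpace ℝ (Fin n)) - 1 with hm
  have hrw : radConst n = ∫ x in Ioi (0 : ℝ), x ^ m * (rexp (-x ^ 2) * x) := by
    rw [radConst, ← hm]
    simp only [Measure.volumeIoiPow, ENNReal.ofReal]
    rw [integral_withDensity_eq_integral_smul
        ((measurable_subtype_coe.pow_const _).real_toNNReal),
      integral_subtype_comap measurableSet_Ioi
        (fun x : ℝ => (x ^ m).toNNReal • (rexp (-x ^ 2) * x))]
    refine setIntegral_congr_fun measurableSet_Ioi fun x hx => ?_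
    rw [NNReal.smul_def, Real.coe_toNNReal _ (pow_nonneg (le_of_lt hx) _), smul_eq_mul]
  have hInt : IntegrableOn (fun x : ℝ => x ^ m * (rexp (-x ^ 2) * x)) (Ioi 0) := by
    have h := integrableOn_rpow_mul_exp_neg_mul_sq (b := 1) one_pos
      (s := (m : ℝ) + 1) (by have : (0:ℝ) ≤ (m:ℝ) := Nat.cast_nonneg m; linarith)
    refine h.congr_fun (fun x hx => ?_) measurableSet_Ioi
    have hx0 : (0 : ℝ) < x := hx
    dsimp only
    rw [show (m : ℝ) + 1 = ((m + 1 : ℕ) : ℝ) by push_cast; ring,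
      Real.rpow_natCast, pow_succ]
    ring_nf
  rw [hrw]
  rw [setIntegral_pos_iff_support_of_nonneg_ae ?hnn hInt]
  · have hsub : Ioi (0 : ℝ) ⊆ Function.support fun x => x ^ m * (rexp (-x ^ 2) * x) := by
      intro x hx
      have hx0 : (0 : ℝ) < x := hx
      have : 0 < x ^ m * (rexp (-x ^ 2) * x) := by positivity
      exact ne_of_gt this
    calc (0 : ENNReal) < volume (Ioi (0:ℝ)) := by simp
      _ ≤ volume (Function.support (fun x => x ^ m * (rexp (-x ^ 2) * x)) ∩ Ioi 0) := by
          refine measure_mono fun x hx => ⟨hsub hx, hx⟩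
  case hnn =>
    filter_upwards [ae_restrict_mem measurableSet_Ioi] with x hx
    have hx0 : (0 : ℝ) < x := hx
    positivity


instance sphereMeasure_isFiniteMeasure (n : ℕ) : IsFiniteMeasure (sphereMeasure n) := by
  unfold sphereMeasure; infer_instance

lemma integral_pi_prod_eq_pow {α : Type*} [MeasurableSpace α] (μ : Measure α) [SigmaFinite μ]
    (f : α → ℝ) (n : ℕ) :
    (∫ w : Fin n → α, ∏ j, f (w j) ∂(Measure.pi fun _ => μ)) = (∫ x, f x ∂μ) ^ n := by
  letI : MeasureSpace α := ⟨μ⟩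
  simpa [Fintype.card_fin] using
    MeasureTheory.integral_fintype_prod_eq_pow (𝕜 := ℝ) (ι := Fin n) f

lemma contGE (n : ℕ) (c : Fin n → Fin n → ℝ) :
    Continuous fun X : Fin n → EuclideanSpace ℝ (Fin n) =>
      (∏ j, rexp (-‖X j‖ ^ 2)) *
        |Matrix.det (Matrix.of fun i j : Fin n => c i j * (X j) i)| := by
  have hdet : Continuous fun X : Fin n → EuclideanSpace ℝ (Fin n) =>
      Matrix.det (Matrix.of fun i j : Fin n => c i j * (X j) i) := by
    refine Continuous.matrix_det (continuous_matrix fun i j => ?_)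
    exact continuous_const.mul ((continuous_apply i).comp
      ((PiLp.continuous_ofLp _ _).comp (continuous_apply j)))
  refine Continuous.mul ?_ hdet.abs
  exact continuous_finset_prod _ fun j _ =>
    Real.continuous_exp.comp (((continuous_norm.comp (continuous_apply j)).pow 2).neg)

lemma contG0 (n : ℕ) (c : Fin n → Fin n → ℝ) :
    Continuous fun Y : Fin n → Fin n → ℝ =>
      (∏ j, rexp (-(∑ i, (Y j i) ^ 2))) *
        |Matrix.det (Matrix.of fun i j : Fin n => c i j * Y j i)| := by
  have hdet : Continuous fun Y : Fin n → Fin n → ℝ =>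
      Matrix.det (Matrix.of fun i j : Fin n => c i j * Y j i) := by
    refine Continuous.matrix_det (continuous_matrix fun i j => ?_)
    exact continuous_const.mul ((continuous_apply i).comp (continuous_apply j))
  refine Continuous.mul ?_ hdet.abs
  refine continuous_finset_prod _ fun j _ => Real.continuous_exp.comp ?_
  exact (continuous_finset_sum _ fun i _ =>
    (((continuous_apply i).comp (continuous_apply j)).pow 2)).neg

lemma nontrivial_euclidean (n : ℕ) (hn : n ≠ 0) :
    Nontrivial (EuclideanSpace ℝ (Fin n)) := by
  refine ⟨⟨EuclideanSpace.single ⟨0, Nat.pos_of_ne_zero hn⟩ (1 : ℝ), 0, fun h => ?_⟩⟩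
  have h1 : ‖EuclideanSpace.single (⟨0, Nat.pos_of_ne_zero hn⟩ : Fin n) (1 : ℝ)‖ = ‖(1 : ℝ)‖ :=
    EuclideanSpace.norm_single _ _
  rw [h, norm_zero] at h1
  simp at h1

lemma gaussDet_eq (n : ℕ) (hn : n ≠ 0) (c : Fin n → Fin n → ℝ) :
    gaussDet n c =
      (∫ v : Fin n → Metric.sphere (0 : EuclideanSpace ℝ (Fin n)) 1,
          |Matrix.det (Matrix.of fun i j : Fin n =>
            c i j * ((v j : EuclideanSpace ℝ (Fin n)) i))|
          ∂(Measure.pi fun _ : Fin n => sphereMeasure n)) * radConst n ^ n := by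
  classical
  haveI : Nontrivial (EuclideanSpace ℝ (Fin n)) := nontrivial_euclidean n hn
  set σ : Measure (Metric.sphere (0 : EuclideanSpace ℝ (Fin n)) 1) := sphereMeasure n with hσ
  set ρ : Measure (Ioi (0 : ℝ)) :=
    Measure.volumeIoiPow (Module.finrank ℝ (EuclideanSpace ℝ (Fin n)) - 1) with hρ
  set U : (Metric.sphere (0 : EuclideanSpace ℝ (Fin n)) 1 × Ioi (0 : ℝ)) →
      EuclideanSpace ℝ (Fin n) :=
    fun y => (y.2 : ℝ) • (y.1 : EuclideanSpace ℝ (Fin n)) with hUdef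
  have hUcont : Continuous U :=
    (continuous_subtype_val.comp continuous_snd).smul
      (continuous_subtype_val.comp continuous_fst)
  have hpolar := Measure.measurePreserving_homeomorphUnitSphereProd
      (volume : Measure (EuclideanSpace ℝ (Fin n)))
  have hUeq : U ∘ (homeomorphUnitSphereProd (EuclideanSpace ℝ (Fin n))) = Subtype.val := by
    funext x
    simp only [Function.comp_apply, hUdef, homeomorphUnitSphereProd_apply_fst_coe,
      homeomorphUnitSphereProd_apply_snd_coe]
    exact smul_inv_smul₀ (norm_ne_zero_iff.2 (Set.mem_compl_singleton_iff.1 x.2)) _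
  have hUmp : MeasurePreserving U (σ.prod ρ) (volume : Measure (EuclideanSpace ℝ (Fin n))) := by
    refine ⟨hUcont.measurable, ?_⟩
    rw [hσ]
    simp only [sphereMeasure]
    rw [← hpolar.map_eq,
      Measure.map_map hUcont.measurable (Homeomorph.measurable _), hUeq,
      MeasurableEmbedding.map_comap (MeasurableEmbedding.subtype_coe
        (measurableSet_singleton (0 : EuclideanSpace ℝ (Fin n))).compl),
      Subtype.range_coe, restrict_compl_singleton]
  have hpin : MeasurePreserving (fun p (j : Fin n) => U (p j))
      (Measure.pi fun _ => σ.prod ρ)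
      (Measure.pi fun _ => (volume : Measure (EuclideanSpace ℝ (Fin n)))) :=
    measurePreserving_pi _ _ fun _ => hUmp
  have happ := measurePreserving_arrowProdEquivProdArrow
      (Metric.sphere (0 : EuclideanSpace ℝ (Fin n)) 1) (Ioi (0 : ℝ)) (Fin n)
      (fun _ => σ) (fun _ => ρ)
  calc gaussDet n c
      = ∫ X, (∏ j, rexp (-‖X j‖ ^ 2)) *
          |Matrix.det (Matrix.of fun i j : Fin n => c i j * (X j) i)|
          ∂(Measure.map (fun p (j : Fin n) => U (p j)) (Measure.pi fun _ => σ.prod ρ)) := by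
        rw [gaussDet, hpin.map_eq]
    _ = ∫ p, (∏ j, rexp (-‖U (p j)‖ ^ 2)) *
          |Matrix.det (Matrix.of fun i j : Fin n => c i j * (U (p j)) i)|
          ∂(Measure.pi fun _ => σ.prod ρ) :=
        integral_map hpin.measurable.aemeasurable (contGE n c).aestronglyMeasurable
    _ = ∫ p, |Matrix.det (Matrix.of fun i j : Fin n =>
            c i j * (((p j).1 : EuclideanSpace ℝ (Fin n)) i))| *
          (∏ j, rexp (-((p j).2 : ℝ) ^ 2) * ((p j).2 : ℝ))
          ∂(Measure.pi fun _ => σ.prod ρ) := by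
        refine integral_congr_ae (ae_of_all _ fun p => ?_)
        beta_reduce
        have hnorm : ∀ j : Fin n, ‖U (p j)‖ = ((p j).2 : ℝ) := by
          intro j
          rw [hUdef]
          rw [norm_smul, mem_sphere_zero_iff_norm.1 (p j).1.2, mul_one,
            Real.norm_eq_abs, abs_of_pos (p j).2.2]
        have hdet : (Matrix.of fun i j : Fin n => c i j * (U (p j)) i)
            = Matrix.of fun i j : Fin n => (fun jj : Fin n => ((p jj).2 : ℝ)) j *
                (Matrix.of fun i j : Fin n =>
                  c i j * (((p j).1 : EuclideanSpace ℝ (Fin n)) i)) i j := by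
          ext i j
          simp only [Matrix.of_apply, hUdef, PiLp.smul_apply, smul_eq_mul]
          ring
        rw [hdet, Matrix.det_mul_row, abs_mul, Finset.abs_prod]
        simp only [hnorm]
        rw [Finset.prod_congr rfl (fun j _ => abs_of_pos (p j).2.2 :
          ∀ j ∈ Finset.univ, |((p j).2 : ℝ)| = ((p j).2 : ℝ)),
          Finset.prod_mul_distrib]
        ring
    _ = ∫ q : (Fin n → Metric.sphere (0 : EuclideanSpace ℝ (Fin n)) 1) × (Fin n → Ioi (0 : ℝ)),
          |Matrix.det (Matrix.of fun i j : Fin n =>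
            c i j * ((q.1 j : EuclideanSpace ℝ (Fin n)) i))| *
          (∏ j, rexp (-((q.2 j) : ℝ) ^ 2) * ((q.2 j) : ℝ))
          ∂((Measure.pi fun _ => σ).prod (Measure.pi fun _ => ρ)) := by
        rw [← happ.map_eq]
        rw [integral_map happ.measurable.aemeasurable]
        · rfl
        · refine Continuous.aestronglyMeasurable ?_
          refine Continuous.mul ?_ ?_
          · refine Continuous.abs (Continuous.matrix_det (continuous_matrix fun i j => ?_))
            exact continuous_const.mul ((continuous_apply i).comp
              ((PiLp.continuous_ofLp _ _).comp
                (continuous_subtype_val.comp ((continuous_apply j).comp continuous_fst))))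
          · refine continuous_finset_prod _ fun j _ => Continuous.mul ?_ ?_
            · exact Real.continuous_exp.comp
                (((continuous_subtype_val.comp ((continuous_apply j).comp continuous_snd)).pow 2).neg)
            · exact continuous_subtype_val.comp ((continuous_apply j).comp continuous_snd)
    _ = (∫ v : Fin n → Metric.sphere (0 : EuclideanSpace ℝ (Fin n)) 1,
          |Matrix.det (Matrix.of fun i j : Fin n =>
            c i j * ((v j : EuclideanSpace ℝ (Fin n)) i))|
          ∂(Measure.pi fun _ => σ)) *
        (∫ w : Fin n → Ioi (0 : ℝ), ∏ j, rexp (-((w j) : ℝ) ^ 2) * ((w j) : ℝ)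
          ∂(Measure.pi fun _ => ρ)) := by
        rw [← integral_prod_mul]
    _ = _ := by
        congr 1
        exact integral_pi_prod_eq_pow ρ
          (fun r : Ioi (0 : ℝ) => rexp (-(r : ℝ) ^ 2) * (r : ℝ)) n

lemma gaussDet_transpose (n : ℕ) (c : Fin n → Fin n → ℝ) :
    gaussDet n c = gaussDet n (fun i j => c j i) := by
  have he : MeasurePreserving (fun (Y : Fin n → Fin n → ℝ) (j : Fin n) =>
      (MeasurableEquiv.toLp 2 (Fin n → ℝ)).symm.symm (Y j))
      (Measure.pi fun _ => Measure.pi fun _ => (volume : Measure ℝ))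
      (Measure.pi fun _ => (volume : Measure (EuclideanSpace ℝ (Fin n)))) :=
    measurePreserving_pi _ _ fun _ =>
      (EuclideanSpace.volume_preserving_symm_measurableEquiv_toLp (Fin n)).symm
  have main : ∀ d : Fin n → Fin n → ℝ, gaussDet n d =
      ∫ Y : Fin n → Fin n → ℝ, (∏ j, rexp (-(∑ i, (Y j i) ^ 2))) *
        |Matrix.det (Matrix.of fun i j : Fin n => d i j * Y j i)|
        ∂(Measure.pi fun _ => Measure.pi fun _ => (volume : Measure ℝ)) := by
    intro d
    calc gaussDet n d
        = ∫ X, (∏ j, rexp (-‖X j‖ ^ 2)) *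
            |Matrix.det (Matrix.of fun i j : Fin n => d i j * (X j) i)|
            ∂(Measure.map (fun (Y : Fin n → Fin n → ℝ) (j : Fin n) =>
              (MeasurableEquiv.toLp 2 (Fin n → ℝ)).symm.symm (Y j))
              (Measure.pi fun _ => Measure.pi fun _ => (volume : Measure ℝ))) := by
          rw [gaussDet, he.map_eq]
      _ = ∫ Y : Fin n → Fin n → ℝ,
            (∏ j, rexp (-‖(MeasurableEquiv.toLp 2 (Fin n → ℝ)).symm.symm (Y j)‖ ^ 2)) *
            |Matrix.det (Matrix.of fun i j : Fin n =>
              d i j * ((MeasurableEquiv.toLp 2 (Fin n → ℝ)).symm.symm (Y j)) i)|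
            ∂(Measure.pi fun _ => Measure.pi fun _ => (volume : Measure ℝ)) :=
          integral_map he.measurable.aemeasurable (contGE n d).aestronglyMeasurable
      _ = _ := by
          refine integral_congr_ae (ae_of_all _ fun Y => ?_)
          beta_reduce
          congr 1
          refine Finset.prod_congr rfl fun j _ => ?_
          congr 1
          have hap : ∀ (y : Fin n → ℝ) (i : Fin n),
              ((MeasurableEquiv.toLp 2 (Fin n → ℝ)).symm.symm y) i = y i := fun y i => rfl
          rw [EuclideanSpace.norm_eq, Real.sq_sqrt (by positivity)]
          simp [hap, Real.norm_eq_abs, sq_abs]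
  rw [main c, main (fun i j => c j i)]
  conv_lhs => rw [← (measurePreserving_transpose n).map_eq]
  rw [integral_map (measurePreserving_transpose n).measurable.aemeasurable
      (contG0 n c).aestronglyMeasurable]
  refine integral_congr_ae (ae_of_all _ fun Y => ?_)
  beta_reduce
  congr 1
  · rw [← Real.exp_sum, ← Real.exp_sum]
    congr 1
    rw [Finset.sum_neg_distrib, Finset.sum_neg_distrib]
    congr 1
    rw [Finset.sum_comm]
  · congr 1
    have htr : (Matrix.of fun i j : Fin n => c i j * Y i j)
        = Matrix.transpose (Matrix.of fun i j : Fin n => c j i * Y j i) := by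
      ext i j
      simp [Matrix.transpose_apply]
    calc Matrix.det (Matrix.of fun i j : Fin n => c i j * Y i j)
        = Matrix.det (Matrix.transpose (Matrix.of fun i j : Fin n => c j i * Y j i)) := by
          rw [htr]
      _ = Matrix.det (Matrix.of fun i j : Fin n => c j i * Y j i) := Matrix.det_transpose _

lemma key_swap (n : ℕ) (hn : n ≠ 0) (c : Fin n → Fin n → ℝ) :
    (∫ v : Fin n → Metric.sphere (0 : EuclideanSpace ℝ (Fin n)) 1,
        |Matrix.det (Matrix.of fun i j : Fin n =>
          c i j * ((v j : EuclideanSpace ℝ (Fin n)) i))|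
        ∂(Measure.pi fun _ : Fin n => sphereMeasure n)) =
    ∫ v : Fin n → Metric.sphere (0 : EuclideanSpace ℝ (Fin n)) 1,
        |Matrix.det (Matrix.of fun i j : Fin n =>
          c j i * ((v j : EuclideanSpace ℝ (Fin n)) i))|
        ∂(Measure.pi fun _ : Fin n => sphereMeasure n) := by
  have hC : radConst n ^ n ≠ 0 := pow_ne_zero _ (ne_of_gt (radConst_pos n))
  refine mul_right_cancel₀ hC ?_
  rw [← gaussDet_eq n hn c, ← gaussDet_eq n hn (fun i j => c j i), gaussDet_transpose n c]


end Aux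

theorem det_integral_diagonal_reduction
    (n : ℕ) (hn : 2 ≤ n) (k : ℕ) (hk1 : 1 ≤ k) (hk2 : k ≤ n - 1)
    (a b : ℝ) (ha : 0 < a) (hb : 0 < b) :
    (∫ v : Fin n → Metric.sphere (0 : EuclideanSpace ℝ (Fin n)) 1,
        |Matrix.det (Matrix.of fun i j : Fin n =>
          (if (j : ℕ) < k then (if (i : ℕ) = n - 1 then b else a) else 1) *
            ((v j : EuclideanSpace ℝ (Fin n)) i))|
        ∂(Measure.pi fun _ : Fin n => sphereMeasure n)) =
      a ^ k *
        ∫ v : Fin n → Metric.sphere (0 : EuclideanSpace ℝ (Fin n)) 1,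
          |Matrix.det (Matrix.of fun i j : Fin n =>
            (if (j : ℕ) = n - 1 then (if (i : ℕ) < k then b / a else 1) else 1) *
              ((v j : EuclideanSpace ℝ (Fin n)) i))|
          ∂(Measure.pi fun _ : Fin n => sphereMeasure n) := by
  classical
  have hn0 : n ≠ 0 := by omega
  have hkn : k < n := by omega
  set c₀ : Fin n → Fin n → ℝ :=
    fun i j => if (i : ℕ) = n - 1 ∧ (j : ℕ) < k then b / a else 1 with hc₀
  have hL : (fun v : Fin n → Metric.sphere (0 : EuclideanSpace ℝ (Fin n)) 1 =>
      |Matrix.det (Matrix.of fun i j : Fin n =>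
        (if (j : ℕ) < k then (if (i : ℕ) = n - 1 then b else a) else 1) *
          ((v j : EuclideanSpace ℝ (Fin n)) i))|)
      = fun v => a ^ k * |Matrix.det (Matrix.of fun i j : Fin n =>
          c₀ i j * ((v j : EuclideanSpace ℝ (Fin n)) i))| := by
    funext v
    have hmat : (Matrix.of fun i j : Fin n =>
        (if (j : ℕ) < k then (if (i : ℕ) = n - 1 then b else a) else 1) *
          ((v j : EuclideanSpace ℝ (Fin n)) i))
        = Matrix.of fun i j : Fin n =>
            (fun jj : Fin n => if (jj : ℕ) < k then a else 1) j *
            (Matrix.of fun i j : Fin n =>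
              c₀ i j * ((v j : EuclideanSpace ℝ (Fin n)) i)) i j := by
      ext i j
      simp only [Matrix.of_apply, hc₀]
      by_cases hj : (j : ℕ) < k <;> by_cases hi : (i : ℕ) = n - 1 <;>
        simp [hj, hi] <;> field_simp
    rw [hmat, Matrix.det_mul_row, abs_mul, Finset.abs_prod]
    congr 1
    calc ∏ j : Fin n, |if (j : ℕ) < k then a else 1|
        = ∏ j : Fin n, (if (j : ℕ) < k then a else 1) :=
          Finset.prod_congr rfl fun j _ => by
            by_cases hj : (j : ℕ) < k <;> simp [hj, abs_of_pos ha]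
      _ = a ^ k := by
          rw [Finset.prod_ite, Finset.prod_const, Finset.prod_const, one_pow, mul_one]
          congr 1
          have hfil : (Finset.univ.filter fun j : Fin n => (j : ℕ) < k)
              = Finset.Iio (⟨k, hkn⟩ : Fin n) := by
            ext j
            simp [Finset.mem_Iio, Fin.lt_def]
          rw [hfil, Fin.card_Iio]
  have hR : (fun v : Fin n → Metric.sphere (0 : EuclideanSpace ℝ (Fin n)) 1 =>
      |Matrix.det (Matrix.of fun i j : Fin n =>
        (if (j : ℕ) = n - 1 then (if (i : ℕ) < k then b / a else 1) else 1) *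
          ((v j : EuclideanSpace ℝ (Fin n)) i))|)
      = fun v => |Matrix.det (Matrix.of fun i j : Fin n =>
          c₀ j i * ((v j : EuclideanSpace ℝ (Fin n)) i))| := by
    funext v
    congr 2
    ext i j
    simp only [Matrix.of_apply, hc₀, ite_and]
  rw [hL, hR, MeasureTheory.integral_const_mul, key_swap n hn0 c₀]
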